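/- The function C(S,t) = S·N(d₁) - K·e^{-r(T-t)}·N(d₂), where N is the standard normal CDF, d₁ = [ln(S/K) + (r + σ²/2)(T-t)]/(σ√(T-t)) and d₂ = d₁ - σ√(T-t), satisfies the Black-Scholes PDE ∂C/∂t + (1/2)σ²S²·∂²C/∂S² + rS·∂C/∂S - rC = 0 for all S > 0 and t < T. -/

import Mathlib

open MeasureTheory Real

noncomputable def stdNormalCDF (x : ℝ) : ℝ :=
  (Real.sqrt (2 * Real.pi))⁻¹ * ∫ s in Set.Iic x, Real.exp (-s ^ 2 / 2)

lemma integrable_gauss : Integrable (fun s : ℝ => Real.exp (-s ^ 2 / 2)) := by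
  have h := integrable_exp_neg_mul_sq (show (0:ℝ) < 1/2 by norm_num)
  convert h using 2 with s
  ring_nf

lemma hasDerivAt_stdNormalCDF (x : ℝ) :
    HasDerivAt stdNormalCDF ((Real.sqrt (2 * Real.pi))⁻¹ * Real.exp (-x ^ 2 / 2)) x := by
  have hc : Continuous fun s : ℝ => Real.exp (-s ^ 2 / 2) := by continuity
  have hsplit : stdNormalCDF = fun y =>
      (Real.sqrt (2 * Real.pi))⁻¹ * ((∫ s in Set.Iic (0:ℝ), Real.exp (-s ^ 2 / 2))
        + ∫ s in (0:ℝ)..y, Real.exp (-s ^ 2 / 2)) := by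
    funext y
    rw [stdNormalCDF]
    congr 1
    rw [← intervalIntegral.integral_Iic_sub_Iic integrable_gauss.integrableOn
      integrable_gauss.integrableOn]
    ring
  rw [hsplit]
  exact ((intervalIntegral.integral_hasDerivAt_right
    integrable_gauss.intervalIntegrable
    hc.aestronglyMeasurable.stronglyMeasurableAtFilter hc.continuousAt).const_add _).const_mul _

/-- The Black-Scholes formula `C(S,t) = S·N(d₁) - K·e^{-r(T-t)}·N(d₂)` satisfies the
Black-Scholes PDE `∂C/∂t + (1/2)σ²S²·∂²C/∂S² + rS·∂C/∂S - rC = 0` for `S > 0`, `t < T`. -/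
theorem black_scholes_formula_solves_pde (σ r K T : ℝ) (hσ : 0 < σ) (hK : 0 < K) :
    let d₁ : ℝ → ℝ → ℝ := fun S t =>
      (Real.log (S / K) + (r + σ ^ 2 / 2) * (T - t)) / (σ * Real.sqrt (T - t))
    let d₂ : ℝ → ℝ → ℝ := fun S t => d₁ S t - σ * Real.sqrt (T - t)
    let C : ℝ → ℝ → ℝ := fun S t =>
      S * stdNormalCDF (d₁ S t) - K * Real.exp (-r * (T - t)) * stdNormalCDF (d₂ S t)
    ∀ S t, 0 < S → t < T →
      deriv (fun t' => C S t') t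
        + (1 / 2) * σ ^ 2 * S ^ 2 * deriv (fun s => deriv (fun s' => C s' t) s) S
        + r * S * deriv (fun s => C s t) S - r * C S t = 0 := by
  intro d₁ d₂ C S t hS htT
  simp only [C, d₁, d₂]
  have hτ : (0:ℝ) < T - t := sub_pos.2 htT
  have hsq : 0 < Real.sqrt (T - t) := Real.sqrt_pos.2 hτ
  have hsq2 : Real.sqrt (T - t) ^ 2 = T - t := Real.sq_sqrt hτ.le
  have hc : 0 < Real.sqrt (2 * Real.pi) := Real.sqrt_pos.2 (by positivity)
  -- derivative of d₁ in the S-variable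
  have hd1S : ∀ s : ℝ, 0 < s → HasDerivAt
      (fun s' => (Real.log (s' / K) + (r + σ ^ 2 / 2) * (T - t)) / (σ * Real.sqrt (T - t)))
      ((s * (σ * Real.sqrt (T - t)))⁻¹) s := by
    intro s hs
    have h1 : HasDerivAt (fun s' : ℝ => s' / K) (1 / K) s := (hasDerivAt_id s).div_const K
    have h2 : HasDerivAt (fun s' : ℝ => Real.log (s' / K)) ((s / K)⁻¹ * (1 / K)) s :=
      by have := (Real.hasDerivAt_log (div_pos hs hK).ne').comp s h1; exact this
    have h3 := (h2.add_const ((r + σ ^ 2 / 2) * (T - t))).div_const (σ * Real.sqrt (T - t))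
    refine h3.congr_deriv ?_
    have := hs.ne'; have := hσ.ne'; have := hsq.ne'; have := hK.ne'
    field_simp
  -- the key identity  s·exp(-d₁²/2) = K·e^{-rτ}·exp(-d₂²/2)
  have hkey : ∀ s : ℝ, 0 < s →
      s * Real.exp (-((Real.log (s / K) + (r + σ ^ 2 / 2) * (T - t)) / (σ * Real.sqrt (T - t))) ^ 2 / 2)
        = K * Real.exp (-r * (T - t)) *
          Real.exp (-((Real.log (s / K) + (r + σ ^ 2 / 2) * (T - t)) / (σ * Real.sqrt (T - t))
            - σ * Real.sqrt (T - t)) ^ 2 / 2) := by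
    intro s hs
    set D : ℝ := (Real.log (s / K) + (r + σ ^ 2 / 2) * (T - t)) / (σ * Real.sqrt (T - t)) with hD
    have hDmul : σ * Real.sqrt (T - t) * D = Real.log (s / K) + (r + σ ^ 2 / 2) * (T - t) := by
      rw [hD]; field_simp
    have hexp : -(D - σ * Real.sqrt (T - t)) ^ 2 / 2
        = -D ^ 2 / 2 + (Real.log (s / K) + r * (T - t)) := by
      have h2 : σ ^ 2 * Real.sqrt (T - t) ^ 2 = σ ^ 2 * (T - t) := by rw [hsq2]
      linear_combination hDmul - (1/2) * h2
    rw [hexp, Real.exp_add, Real.exp_add, Real.exp_log (div_pos hs hK),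
      show -r * (T - t) = -(r * (T - t)) by ring, Real.exp_neg]
    field_simp
  -- S-derivative of C : the delta is N(d₁)
  have hCS : ∀ s : ℝ, 0 < s → HasDerivAt
      (fun s' => s' * stdNormalCDF ((Real.log (s' / K) + (r + σ ^ 2 / 2) * (T - t)) / (σ * Real.sqrt (T - t)))
        - K * Real.exp (-r * (T - t)) *
          stdNormalCDF ((Real.log (s' / K) + (r + σ ^ 2 / 2) * (T - t)) / (σ * Real.sqrt (T - t))
            - σ * Real.sqrt (T - t)))
      (stdNormalCDF ((Real.log (s / K) + (r + σ ^ 2 / 2) * (T - t)) / (σ * Real.sqrt (T - t)))) s := by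
    intro s hs
    have h1 := (hasDerivAt_stdNormalCDF _).comp s (hd1S s hs)
    have h2 := (hasDerivAt_id s).mul h1
    have h3 := ((hasDerivAt_stdNormalCDF _).comp s ((hd1S s hs).sub_const (σ * Real.sqrt (T - t)))).const_mul
      (K * Real.exp (-r * (T - t)))
    have h4 := h2.sub h3
    refine h4.congr_deriv ?_
    have hk := hkey s hs
    simp only [Function.comp_apply, id_eq]
    linear_combination (((Real.sqrt (2 * Real.pi))⁻¹ * (s * (σ * Real.sqrt (T - t)))⁻¹)) * hk
  -- second derivative in S
  have hEq : (fun s => deriv (fun s' =>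
        s' * stdNormalCDF ((Real.log (s' / K) + (r + σ ^ 2 / 2) * (T - t)) / (σ * Real.sqrt (T - t)))
          - K * Real.exp (-r * (T - t)) *
            stdNormalCDF ((Real.log (s' / K) + (r + σ ^ 2 / 2) * (T - t)) / (σ * Real.sqrt (T - t))
              - σ * Real.sqrt (T - t))) s)
      =ᶠ[nhds S] (fun s =>
        stdNormalCDF ((Real.log (s / K) + (r + σ ^ 2 / 2) * (T - t)) / (σ * Real.sqrt (T - t)))) := by
    filter_upwards [Ioi_mem_nhds hS] with s hs using (hCS s hs).deriv
  have h2nd : deriv (fun s => deriv (fun s' =>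
        s' * stdNormalCDF ((Real.log (s' / K) + (r + σ ^ 2 / 2) * (T - t)) / (σ * Real.sqrt (T - t)))
          - K * Real.exp (-r * (T - t)) *
            stdNormalCDF ((Real.log (s' / K) + (r + σ ^ 2 / 2) * (T - t)) / (σ * Real.sqrt (T - t))
              - σ * Real.sqrt (T - t))) s) S
      = (Real.sqrt (2 * Real.pi))⁻¹ *
          Real.exp (-((Real.log (S / K) + (r + σ ^ 2 / 2) * (T - t)) / (σ * Real.sqrt (T - t))) ^ 2 / 2)
          * (S * (σ * Real.sqrt (T - t)))⁻¹ := by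
    rw [hEq.deriv_eq]
    exact ((hasDerivAt_stdNormalCDF _).comp S (hd1S S hS)).deriv
  -- derivative in t
  have hTt : HasDerivAt (fun t' : ℝ => T - t') (0 - 1) t :=
    (hasDerivAt_const t T).sub (hasDerivAt_id t)
  have hsqt : HasDerivAt (fun t' => Real.sqrt (T - t')) (1 / (2 * Real.sqrt (T - t)) * (0 - 1)) t :=
    (Real.hasDerivAt_sqrt hτ.ne').comp t hTt
  have hnum : HasDerivAt (fun t' => Real.log (S / K) + (r + σ ^ 2 / 2) * (T - t'))
      ((r + σ ^ 2 / 2) * (0 - 1)) t := (hTt.const_mul _).const_add _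
  have hden : HasDerivAt (fun t' => σ * Real.sqrt (T - t'))
      (σ * (1 / (2 * Real.sqrt (T - t)) * (0 - 1))) t := hsqt.const_mul σ
  have hd1t := hnum.div hden (by positivity)
  have hd2t := hd1t.sub (hsqt.const_mul σ)
  have hEt : HasDerivAt (fun t' => Real.exp (-r * (T - t')))
      (Real.exp (-r * (T - t)) * (-r * (0 - 1))) t := (hTt.const_mul (-r)).exp
  have hN1 := (hasDerivAt_stdNormalCDF _).comp t hd1t
  have hN2 := (hasDerivAt_stdNormalCDF _).comp t hd2t
  have hCt : HasDerivAt (fun t' =>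
      S * stdNormalCDF ((Real.log (S / K) + (r + σ ^ 2 / 2) * (T - t')) / (σ * Real.sqrt (T - t')))
        - K * Real.exp (-r * (T - t')) *
          stdNormalCDF ((Real.log (S / K) + (r + σ ^ 2 / 2) * (T - t')) / (σ * Real.sqrt (T - t'))
            - σ * Real.sqrt (T - t'))) _ t :=
    (hN1.const_mul S).sub ((hEt.const_mul K).mul hN2)
  rw [hCt.deriv, h2nd, (hCS S hS).deriv]
  simp only [Pi.div_apply, Pi.sub_apply]
  have hk := hkey S hS
  set sq := Real.sqrt (T - t) with hsqdef
  set d1v := (Real.log (S / K) + (r + σ ^ 2 / 2) * (T - t)) / (σ * sq) with hd1vdef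
  set e1 := Real.exp (-d1v ^ 2 / 2) with he1def
  set e2 := Real.exp (-(d1v - σ * sq) ^ 2 / 2) with he2def
  set E := Real.exp (-r * (T - t)) with hEdef
  set N1 := stdNormalCDF d1v with hN1def
  set N2 := stdNormalCDF (d1v - σ * sq) with hN2def
  have he1 : e1 = K * E * e2 / S := by
    rw [eq_div_iff hS.ne']
    linarith [hk]
  rw [he1]
  have hE0 : E ≠ 0 := Real.exp_ne_zero _
  field_simp
  ring
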